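/- arXiv:2510.04972 — 4 statements merged into one kernel-verified Lean document; each statement's English description precedes it below -/
import Mathlib

section
/- Let w : B^N → ℝ, let S_k = {j₁,…,j_k} ⊆ [N] be distinct indices, let S̃ ⊆ [N] be disjoint from S_k, and let f : ℝ → ℝ have k continuous bounded derivatives. Then for every 1 ≤ k̃ ≤ k, Δ(f∘w; S̃; S_{k̃}) = ∑_{D ⊆ S_{k̃}∖{j₁}} ∫₀¹ Δ(w; D ∪ S̃; S_{k̃}∖D) · Δ(f′(w^{j₁} + z(w − w^{j₁})); S̃; D) dz, where S_{k̃} = {j₁,…,j_{k̃}}. -/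
/-- `σ_S`: the configuration `σ` with all coordinates in `S` replaced by `b0`. -/
def subst {B : Type*} {N : ℕ} (b0 : B) (σ : Fin N → B) (S : Finset (Fin N)) :
    Fin N → B :=
  fun i => if i ∈ S then b0 else σ i

/-- The discrete mixed difference `Δ(η; A; D) = ∑_{E ⊆ D} (-1)^{|E|} η(σ_{A ∪ E})`. -/
noncomputable def disc {B : Type*} {N : ℕ} (b0 : B) (σ : Fin N → B)
    (η : (Fin N → B) → ℝ) (A D : Finset (Fin N)) : ℝ :=
  ∑ E ∈ D.powerset, (-1 : ℝ) ^ E.card * η (subst b0 σ (A ∪ E))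

lemma subst_subst {B : Type*} {N : ℕ} (b0 : B) (σ : Fin N → B) (T S : Finset (Fin N)) :
    subst b0 (subst b0 σ T) S = subst b0 σ (S ∪ T) := by
  funext i
  simp only [subst, Finset.mem_union]
  by_cases h : i ∈ S <;> by_cases h' : i ∈ T <;> simp [h, h']

lemma disc_insert {B : Type*} {N : ℕ} (b0 : B) (σ : Fin N → B)
    (η : (Fin N → B) → ℝ) (A : Finset (Fin N)) {x : Fin N} {T : Finset (Fin N)} (hx : x ∉ T) :
    disc b0 σ η A (insert x T) = disc b0 σ η A T - disc b0 σ η (A ∪ {x}) T := by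
  unfold disc
  rw [Finset.sum_powerset_insert hx]
  have h : ∀ t ∈ T.powerset, (-1 : ℝ) ^ (insert x t).card * η (subst b0 σ (A ∪ insert x t))
      = -((-1 : ℝ) ^ t.card * η (subst b0 σ ((A ∪ {x}) ∪ t))) := by
    intro t ht
    have hxt : x ∉ t := fun h => hx (Finset.mem_powerset.mp ht h)
    have hset : A ∪ insert x t = (A ∪ {x}) ∪ t := by
      ext a; simp [Finset.mem_insert]
    rw [Finset.card_insert_of_notMem hxt, hset, pow_succ]
    ring
  rw [Finset.sum_congr rfl h, Finset.sum_neg_distrib]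
  ring

lemma disc_leibniz {B : Type*} {N : ℕ} (b0 : B) (σ : Fin N → B)
    (u v : (Fin N → B) → ℝ) (T : Finset (Fin N)) :
    ∀ A : Finset (Fin N), disc b0 σ (fun τ => u τ * v τ) A T =
      ∑ D ∈ T.powerset, disc b0 σ u (D ∪ A) (T \ D) * disc b0 σ v A D := by
  induction T using Finset.induction with
  | empty => intro A; simp [disc]
  | @insert x T hx ih =>
    intro A
    rw [disc_insert b0 σ _ A hx, ih A, ih (A ∪ {x}), Finset.sum_powerset_insert hx,
      ← Finset.sum_sub_distrib, ← Finset.sum_add_distrib]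
    refine Finset.sum_congr rfl ?_
    intro D hD
    have hDT : D ⊆ T := Finset.mem_powerset.mp hD
    have hxD : x ∉ D := fun h => hx (hDT h)
    have e1 : insert x T \ D = insert x (T \ D) := by
      ext a
      by_cases hax : a = x
      · subst hax; simp [hx, hxD]
      · simp [Finset.mem_sdiff, Finset.mem_insert, hax]
    have e2 : insert x T \ insert x D = T \ D := by
      ext a; simp only [Finset.mem_sdiff, Finset.mem_insert]
      constructor
      · rintro ⟨h1 | h1, h2⟩
        · exact absurd (Or.inl h1) h2
        · exact ⟨h1, fun h3 => h2 (Or.inr h3)⟩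
      · rintro ⟨h1, h2⟩
        exact ⟨Or.inr h1, fun h3 => h3.elim (fun h4 => hx (h4 ▸ h1)) h2⟩
    have e3 : insert x D ∪ A = D ∪ (A ∪ {x}) := by
      ext a; simp [Finset.mem_insert]
    have e4 : (D ∪ A) ∪ {x} = D ∪ (A ∪ {x}) := by rw [Finset.union_assoc]
    have hxTD : x ∉ T \ D := fun h => hx (Finset.mem_sdiff.mp h).1
    rw [e1, e2, e3, disc_insert b0 σ u (D ∪ A) hxTD, disc_insert b0 σ v A hxD, e4]
    ring

lemma disc_w_insert {B : Type*} {N : ℕ} (b0 : B) (σ : Fin N → B)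
    (w : (Fin N → B) → ℝ) (A : Finset (Fin N)) {x : Fin N} {T : Finset (Fin N)} (hx : x ∉ T) :
    disc b0 σ w A (insert x T) =
      disc b0 σ (fun τ => w τ - w (subst b0 τ {x})) A T := by
  rw [disc_insert b0 σ w A hx]
  unfold disc
  rw [← Finset.sum_sub_distrib]
  refine Finset.sum_congr rfl ?_
  intro E _
  simp only [subst_subst]
  rw [show ({x} ∪ (A ∪ E) : Finset (Fin N)) = A ∪ {x} ∪ E from by ext a; simp]
  ring

lemma ftc_aux (f : ℝ → ℝ) (hdf : Differentiable ℝ f) (hcd : Continuous (deriv f)) (a b : ℝ) :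
    f b - f a = ∫ z in (0:ℝ)..1, (b - a) * deriv f (a + z * (b - a)) := by
  have h : ∀ z ∈ Set.uIcc (0:ℝ) 1, HasDerivAt (fun t => f (a + t * (b - a)))
      ((b - a) * deriv f (a + z * (b - a))) z := by
    intro z _
    have h1 : HasDerivAt (fun t : ℝ => a + t * (b - a)) (b - a) z := by
      simpa using ((hasDerivAt_id z).mul_const (b - a)).const_add a
    have h2 := (hdf (a + z * (b - a))).hasDerivAt
    simpa [Function.comp_def, mul_comm] using h2.comp z h1
  have hint : IntervalIntegrable (fun z => (b - a) * deriv f (a + z * (b - a)))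
      MeasureTheory.volume 0 1 :=
    (continuous_const.mul (hcd.comp (by continuity))).intervalIntegrable _ _
  rw [intervalIntegral.integral_eq_sub_of_hasDerivAt h hint]
  norm_num

lemma main_core {B : Type*} {N : ℕ} (b0 : B) (σ : Fin N → B)
    (w : (Fin N → B) → ℝ) (f : ℝ → ℝ)
    (hdf : Differentiable ℝ f) (hcd : Continuous (deriv f))
    (Stilde : Finset (Fin N)) {j1 : Fin N} {S' : Finset (Fin N)} (hj1 : j1 ∉ S') :
    disc b0 σ (f ∘ w) Stilde (insert j1 S') =
      ∑ D ∈ S'.powerset,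
        ∫ z in (0:ℝ)..1,
          disc b0 σ w (D ∪ Stilde) (insert j1 (S' \ D)) *
            disc b0 σ
              (fun τ => deriv f
                (w (subst b0 τ {j1}) + z * (w τ - w (subst b0 τ {j1}))))
              Stilde D := by
  set g : ℝ → (Fin N → B) → ℝ := fun z τ =>
    deriv f (w (subst b0 τ {j1}) + z * (w τ - w (subst b0 τ {j1}))) with hg
  set u : (Fin N → B) → ℝ := fun τ => w τ - w (subst b0 τ {j1}) with hu
  have hcontg : ∀ (A D : Finset (Fin N)), Continuous fun z : ℝ => disc b0 σ (g z) A D := by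
    intro A D
    unfold disc
    apply continuous_finset_sum
    intro E _
    exact continuous_const.mul (hcd.comp (continuous_const.add
      (continuous_id.mul continuous_const)))
  calc disc b0 σ (f ∘ w) Stilde (insert j1 S')
      = ∑ E ∈ S'.powerset, ∫ z in (0:ℝ)..1,
          (-1 : ℝ) ^ E.card * (u (subst b0 σ (Stilde ∪ E)) * g z (subst b0 σ (Stilde ∪ E))) := by
        rw [disc_insert b0 σ _ Stilde hj1]
        unfold disc
        rw [← Finset.sum_sub_distrib]
        refine Finset.sum_congr rfl ?_
        intro E _
        have key : (f ∘ w) (subst b0 σ (Stilde ∪ E)) - (f ∘ w) (subst b0 σ ((Stilde ∪ {j1}) ∪ E))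
            = ∫ z in (0:ℝ)..1, u (subst b0 σ (Stilde ∪ E)) * g z (subst b0 σ (Stilde ∪ E)) := by
          have hs : subst b0 (subst b0 σ (Stilde ∪ E)) {j1} = subst b0 σ ((Stilde ∪ {j1}) ∪ E) := by
            have hset : ({j1} ∪ (Stilde ∪ E) : Finset (Fin N)) = (Stilde ∪ {j1}) ∪ E := by
              ext a; simp
            rw [subst_subst, hset]
          simp only [hg, hu, hs, Function.comp_apply]
          exact ftc_aux f hdf hcd _ _
        rw [mul_comm ((-1:ℝ) ^ E.card) ((f ∘ w) (subst b0 σ (Stilde ∪ E))),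
          mul_comm ((-1:ℝ) ^ E.card) ((f ∘ w) (subst b0 σ (Stilde ∪ {j1} ∪ E)))]
        rw [← sub_mul, key, ← intervalIntegral.integral_mul_const]
        refine intervalIntegral.integral_congr ?_
        intro z _
        ring
    _ = ∫ z in (0:ℝ)..1, ∑ E ∈ S'.powerset,
          (-1 : ℝ) ^ E.card * (u (subst b0 σ (Stilde ∪ E)) * g z (subst b0 σ (Stilde ∪ E))) := by
        rw [intervalIntegral.integral_finset_sum]
        intro E _
        exact (continuous_const.mul (continuous_const.mul (hcd.comp
          (continuous_const.add (continuous_id.mul continuous_const))))).intervalIntegrable _ _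
    _ = ∫ z in (0:ℝ)..1, ∑ D ∈ S'.powerset,
          disc b0 σ w (D ∪ Stilde) (insert j1 (S' \ D)) * disc b0 σ (g z) Stilde D := by
        refine intervalIntegral.integral_congr ?_
        intro z _
        dsimp only
        have : (∑ E ∈ S'.powerset,
            (-1 : ℝ) ^ E.card * (u (subst b0 σ (Stilde ∪ E)) * g z (subst b0 σ (Stilde ∪ E))))
            = disc b0 σ (fun τ => u τ * g z τ) Stilde S' := rfl
        rw [this, disc_leibniz b0 σ u (g z) S' Stilde]
        refine Finset.sum_congr rfl ?_
        intro D hD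
        have hj1' : j1 ∉ S' \ D := fun h => hj1 (Finset.mem_sdiff.mp h).1
        rw [disc_w_insert b0 σ w (D ∪ Stilde) hj1']
    _ = ∑ D ∈ S'.powerset, ∫ z in (0:ℝ)..1,
          disc b0 σ w (D ∪ Stilde) (insert j1 (S' \ D)) * disc b0 σ (g z) Stilde D := by
        rw [intervalIntegral.integral_finset_sum]
        intro D _
        exact (continuous_const.mul (hcontg Stilde D)).intervalIntegrable _ _

lemma main_erase {B : Type*} {N : ℕ} (b0 : B) (σ : Fin N → B)
    (w : (Fin N → B) → ℝ) (f : ℝ → ℝ)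
    (hdf : Differentiable ℝ f) (hcd : Continuous (deriv f))
    (Stilde : Finset (Fin N)) {j1 : Fin N} {S : Finset (Fin N)} (hmem : j1 ∈ S) :
    disc b0 σ (f ∘ w) Stilde S =
      ∑ D ∈ (S.erase j1).powerset,
        ∫ z in (0:ℝ)..1,
          disc b0 σ w (D ∪ Stilde) (S \ D) *
            disc b0 σ
              (fun τ => deriv f
                (w (subst b0 τ {j1}) + z * (w τ - w (subst b0 τ {j1}))))
              Stilde D := by
  have hj1 : j1 ∉ S.erase j1 := Finset.notMem_erase _ _
  have hS : insert j1 (S.erase j1) = S := Finset.insert_erase hmem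
  calc disc b0 σ (f ∘ w) Stilde S
      = disc b0 σ (f ∘ w) Stilde (insert j1 (S.erase j1)) := by rw [hS]
    _ = ∑ D ∈ (S.erase j1).powerset,
        ∫ z in (0:ℝ)..1,
          disc b0 σ w (D ∪ Stilde) (insert j1 (S.erase j1 \ D)) *
            disc b0 σ
              (fun τ => deriv f
                (w (subst b0 τ {j1}) + z * (w τ - w (subst b0 τ {j1}))))
              Stilde D := main_core b0 σ w f hdf hcd Stilde hj1
    _ = _ := by
        refine Finset.sum_congr rfl ?_
        intro D hD
        have hDsub : D ⊆ S.erase j1 := Finset.mem_powerset.mp hD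
        have hj1D : j1 ∉ D := fun h => hj1 (hDsub h)
        have hset : insert j1 (S.erase j1 \ D) = S \ D := by
          ext a
          by_cases hax : a = j1
          · subst hax; simp [hmem, hj1D]
          · simp [Finset.mem_sdiff, Finset.mem_insert, Finset.mem_erase, hax]
        simp only [hset]

/-- Discrete Faà di Bruno type identity: for distinct indices `j₁, …, j_k`, a set `S̃`
disjoint from them, and `f` with `k` continuous bounded derivatives, for every
`1 ≤ k̃ ≤ k`,
`Δ(f∘w; S̃; S_{k̃}) = ∑_{D ⊆ S_{k̃}∖{j₁}} ∫₀¹ Δ(w; D ∪ S̃; S_{k̃}∖D) ·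
  Δ(f′(w^{j₁} + z (w − w^{j₁})); S̃; D) dz`. -/
theorem stmt_2 {B : Type*} {N k : ℕ} (b0 : B) (σ : Fin N → B)
    (w : (Fin N → B) → ℝ) (j : Fin k → Fin N) (hj : Function.Injective j)
    (Stilde : Finset (Fin N)) (hdisj : ∀ i, j i ∉ Stilde)
    (f : ℝ → ℝ) (hf : ContDiff ℝ (k : ℕ∞) f) (C : ℝ)
    (hbd : ∀ m ≤ k, ∀ x : ℝ, |iteratedDeriv m f x| ≤ C)
    (kt : ℕ) (h1 : 1 ≤ kt) (h2 : kt ≤ k) :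
    disc b0 σ (f ∘ w) Stilde
        (Finset.image j (Finset.univ.filter fun i : Fin k => (i : ℕ) < kt)) =
      ∑ D ∈ ((Finset.image j (Finset.univ.filter fun i : Fin k => (i : ℕ) < kt)).erase
          (j ⟨0, by omega⟩)).powerset,
        ∫ z in (0:ℝ)..1,
          disc b0 σ w (D ∪ Stilde)
              ((Finset.image j (Finset.univ.filter fun i : Fin k => (i : ℕ) < kt)) \ D) *
            disc b0 σ
              (fun τ => deriv f
                (w (subst b0 τ {j ⟨0, by omega⟩}) +
                  z * (w τ - w (subst b0 τ {j ⟨0, by omega⟩}))))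
              Stilde D := by
  have hk1 : (1 : WithTop ℕ∞) ≤ ((k : ℕ∞) : WithTop ℕ∞) := by exact_mod_cast h1.trans h2
  have hdf : Differentiable ℝ f := hf.differentiable (by simp; omega)
  have hcd : Continuous (deriv f) := hf.continuous_deriv hk1
  have hmem : j ⟨0, by omega⟩ ∈
      Finset.image j (Finset.univ.filter fun i : Fin k => (i : ℕ) < kt) :=
    Finset.mem_image_of_mem j (by simp [Finset.mem_filter]; omega)
  exact main_erase b0 σ w f hdf hcd Stilde hmem
end

section
/- Let ϱ be a non-degenerate symmetric probability measure on [−1,1] with log-MGF Ξ, and assume Ξ‴(x) ≤ 0 for x > 0 and Ξ‴(x) ≥ 0 for x < 0. Fix r with 0 ≤ r ≤ 1/Ξ″(0) and s = 0. Then the function φ̃(x) := x − Ξ′(rx) satisfies φ̃(x) > 0 for all x > 0 (when r < 1/Ξ″(0)), and in all cases x = 0 is the unique solution of x = Ξ′(rx), i.e., the unique maximizer of φ(x) = rx²/2 − x(Ξ′)⁻¹(x) + Ξ((Ξ′)⁻¹(x)) on the range of Ξ′. -/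
open MeasureTheory
open scoped Nat

namespace CW

noncomputable def Mk (ϱ : Measure ℝ) (k : ℕ) (t : ℝ) : ℝ := ∫ y, y ^ k * Real.exp (t * y) ∂ϱ

noncomputable def Mf (ϱ : Measure ℝ) (t : ℝ) : ℝ := ∫ y, Real.exp (t * y) ∂ϱ

lemma ae_abs_le (ϱ : Measure ℝ) (hsupp : ϱ ((Set.Icc (-1 : ℝ) 1)ᶜ) = 0) :
    ∀ᵐ y ∂ϱ, |y| ≤ 1 := by
  have : ∀ᵐ y ∂ϱ, y ∈ Set.Icc (-1:ℝ) 1 := by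
    rw [ae_iff]
    convert hsupp using 2
    rfl
  filter_upwards [this] with y hy
  exact abs_le.2 ⟨hy.1, hy.2⟩

lemma integrable_pow_exp (ϱ : Measure ℝ) [IsProbabilityMeasure ϱ]
    (hae : ∀ᵐ y ∂ϱ, |y| ≤ 1) (k : ℕ) (t : ℝ) :
    Integrable (fun y => y ^ k * Real.exp (t * y)) ϱ := by
  refine Integrable.mono' (integrable_const (Real.exp |t|)) ?_ ?_
  · exact ((continuous_pow k).mul
      (Real.continuous_exp.comp (continuous_const.mul continuous_id))).aestronglyMeasurable
  · filter_upwards [hae] with y hy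
    rw [Real.norm_eq_abs, abs_mul, abs_pow, Real.abs_exp]
    have h1 : |y| ^ k ≤ 1 := pow_le_one₀ (abs_nonneg y) hy
    have h2 : Real.exp (t * y) ≤ Real.exp |t| := by
      refine Real.exp_le_exp.2 ?_
      calc t * y ≤ |t * y| := le_abs_self _
        _ = |t| * |y| := abs_mul _ _
        _ ≤ |t| * 1 := by gcongr
        _ = |t| := mul_one _
    calc |y| ^ k * Real.exp (t * y) ≤ 1 * Real.exp |t| :=
          mul_le_mul h1 h2 (Real.exp_nonneg _) zero_le_one
      _ = Real.exp |t| := one_mul _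

lemma hasDerivAt_Mk (ϱ : Measure ℝ) [IsProbabilityMeasure ϱ]
    (hae : ∀ᵐ y ∂ϱ, |y| ≤ 1) (k : ℕ) (t₀ : ℝ) :
    HasDerivAt (Mk ϱ k) (Mk ϱ (k + 1) t₀) t₀ := by
  have key := hasDerivAt_integral_of_dominated_loc_of_deriv_le (μ := ϱ)
    (F := fun t y => y ^ k * Real.exp (t * y))
    (F' := fun t y => y ^ (k + 1) * Real.exp (t * y))
    (bound := fun _ => Real.exp (|t₀| + 1)) (x₀ := t₀) (s := Metric.ball t₀ 1) (Metric.ball_mem_nhds t₀ one_pos)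
    ?_ ?_ ?_ ?_ ?_ ?_
  · exact key.2
  · filter_upwards with t
    exact ((continuous_pow k).mul
      (Real.continuous_exp.comp (continuous_const.mul continuous_id))).aestronglyMeasurable
  · exact integrable_pow_exp ϱ hae k t₀
  · exact ((continuous_pow (k+1)).mul
      (Real.continuous_exp.comp (continuous_const.mul continuous_id))).aestronglyMeasurable
  · filter_upwards [hae] with y hy t ht
    rw [Real.norm_eq_abs, abs_mul, abs_pow, Real.abs_exp]
    have h1 : |y| ^ (k+1) ≤ 1 := pow_le_one₀ (abs_nonneg y) hy
    have h2 : Real.exp (t * y) ≤ Real.exp (|t₀| + 1) := by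
      refine Real.exp_le_exp.2 ?_
      have ht' : |t| ≤ |t₀| + 1 := by
        have := Metric.mem_ball.1 ht
        rw [Real.dist_eq] at this
        calc |t| = |t₀ + (t - t₀)| := by ring_nf
          _ ≤ |t₀| + |t - t₀| := abs_add_le _ _
          _ ≤ |t₀| + 1 := by linarith
      calc t * y ≤ |t * y| := le_abs_self _
        _ = |t| * |y| := abs_mul _ _
        _ ≤ (|t₀| + 1) * 1 := by
            apply mul_le_mul ht' hy (abs_nonneg y)
            positivity
        _ = |t₀| + 1 := mul_one _
    calc |y| ^ (k+1) * Real.exp (t * y) ≤ 1 * Real.exp (|t₀| + 1) :=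
          mul_le_mul h1 h2 (Real.exp_nonneg _) zero_le_one
      _ = _ := one_mul _
  · exact integrable_const _
  · filter_upwards with y t _
    have h : HasDerivAt (fun x : ℝ => x * y) y t := hasDerivAt_mul_const y
    have h2 : HasDerivAt (fun x : ℝ => Real.exp (x * y)) (Real.exp (t * y) * y) t :=
      h.exp
    have h3 := h2.const_mul (y ^ k)
    have hf : y ^ (k + 1) * Real.exp (t * y) = y ^ k * (Real.exp (t * y) * y) := by ring
    rw [hf]; exact h3

lemma analyticOnNhd_Mf (ϱ : Measure ℝ) [IsProbabilityMeasure ϱ]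
    (hae : ∀ᵐ y ∂ϱ, |y| ≤ 1) :
    AnalyticOnNhd ℝ (Mf ϱ) Set.univ := by
  have hintp : ∀ n : ℕ, Integrable (fun y => y ^ n) ϱ := by
    intro n
    simpa using integrable_pow_exp ϱ hae n 0
  have hm : ∀ n : ℕ, |∫ y, y ^ n ∂ϱ| ≤ 1 := by
    intro n
    calc |∫ y, y ^ n ∂ϱ| ≤ ∫ y, |y ^ n| ∂ϱ := by
          simpa using norm_integral_le_integral_norm (fun y => y ^ n) (μ := ϱ)
      _ ≤ ∫ _, (1:ℝ) ∂ϱ := by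
          refine integral_mono_ae (hintp n).abs (integrable_const 1) ?_
          filter_upwards [hae] with y hy
          rw [abs_pow]
          exact pow_le_one₀ (abs_nonneg y) hy
      _ = 1 := by simp
  set p : FormalMultilinearSeries ℝ ℝ ℝ :=
    FormalMultilinearSeries.ofScalars ℝ (fun n => (∫ y, y ^ n ∂ϱ) / n !) with hp
  have hrad : p.radius = ⊤ := by
    apply FormalMultilinearSeries.radius_eq_top_of_summable_norm
    intro r
    refine Summable.of_nonneg_of_le (fun n => by positivity) (fun n => ?_)
      (Real.summable_pow_div_factorial r)
    rw [hp, FormalMultilinearSeries.ofScalars_norm]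
    rw [Real.norm_eq_abs, abs_div, abs_of_nonneg (by positivity : (0:ℝ) ≤ (n ! : ℝ))]
    have : |∫ y, y ^ n ∂ϱ| / (n ! : ℝ) ≤ 1 / n ! := by
      apply div_le_div_of_nonneg_right (hm n) ?_ |>.trans_eq rfl
      · positivity
    calc |∫ y, y ^ n ∂ϱ| / (n ! : ℝ) * (r:ℝ) ^ n ≤ 1 / n ! * (r:ℝ) ^ n := by
          apply mul_le_mul_of_nonneg_right this (by positivity)
      _ = (r:ℝ) ^ n / n ! := by ring
  have hsum : ∀ t : ℝ, HasSum (fun n : ℕ => (∫ y, y ^ n ∂ϱ) / n ! * t ^ n)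
      (∫ y, Real.exp (t * y) ∂ϱ) := by
    intro t
    have hF_int : ∀ n : ℕ, Integrable (fun y => t ^ n / n ! * y ^ n) ϱ :=
      fun n => (hintp n).const_mul _
    have hF_sum : Summable fun n : ℕ => ∫ y, ‖t ^ n / n ! * y ^ n‖ ∂ϱ := by
      refine Summable.of_nonneg_of_le
        (fun n => integral_nonneg fun y => norm_nonneg _) (fun n => ?_)
        (Real.summable_pow_div_factorial |t|)
      calc ∫ y, ‖t ^ n / n ! * y ^ n‖ ∂ϱ ≤ ∫ _, |t ^ n / n !| ∂ϱ := by
            refine integral_mono_ae ((hF_int n).norm) (integrable_const _) ?_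
            filter_upwards [hae] with y hy
            rw [Real.norm_eq_abs, abs_mul]
            have : |y ^ n| ≤ 1 := by
              rw [abs_pow]; exact pow_le_one₀ (abs_nonneg y) hy
            calc |t ^ n / n !| * |y ^ n| ≤ |t ^ n / n !| * 1 := by gcongr
              _ = |t ^ n / n !| := mul_one _
        _ = |t ^ n / n !| := by simp
        _ = |t| ^ n / n ! := by
            rw [abs_div, abs_pow, abs_of_nonneg (by positivity : (0:ℝ) ≤ (n ! : ℝ))]
    have key := hasSum_integral_of_summable_integral_norm hF_int hF_sum
    have hpt : ∀ y : ℝ, (∑' n : ℕ, t ^ n / n ! * y ^ n) = Real.exp (t * y) := by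
      intro y
      have h := NormedSpace.expSeries_div_hasSum_exp (t * y)
      have h2 : HasSum (fun n : ℕ => t ^ n / n ! * y ^ n) (NormedSpace.exp (t * y)) := by
        have hf : (fun n : ℕ => t ^ n / n ! * y ^ n) = fun n => (t * y) ^ n / n ! := by
          funext n
          rw [mul_pow]
          ring
        rw [hf]; exact h
      rw [h2.tsum_eq, Real.exp_eq_exp_ℝ]
    have heq : (∫ y, (∑' n : ℕ, t ^ n / n ! * y ^ n) ∂ϱ) = ∫ y, Real.exp (t * y) ∂ϱ := by
      congr 1
      funext y
      exact hpt y
    rw [heq] at key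
    have hf : (fun n : ℕ => (∫ y, y ^ n ∂ϱ) / n ! * t ^ n) = fun n => ∫ y, t ^ n / n ! * y ^ n ∂ϱ := by
      funext n
      rw [integral_const_mul]
      ring
    rw [hf]; exact key
  have hball : HasFPowerSeriesOnBall (Mf ϱ) p 0 ⊤ := by
    refine ⟨hrad.ge, ENNReal.zero_lt_top, fun {y} _ => ?_⟩
    have := hsum y
    simp only [zero_add, hp, FormalMultilinearSeries.ofScalars_apply_eq, smul_eq_mul]
    exact this
  intro x _
  exact hball.analyticAt_of_mem (by simp [edist_lt_top])

lemma Mf_pos (ϱ : Measure ℝ) [IsProbabilityMeasure ϱ]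
    (hae : ∀ᵐ y ∂ϱ, |y| ≤ 1) (t : ℝ) : 0 < Mf ϱ t := by
  have hint : Integrable (fun y => Real.exp (t * y)) ϱ := by
    simpa using integrable_pow_exp ϱ hae 0 t
  have h1 : 0 ≤ Mf ϱ t := integral_nonneg fun y => (Real.exp_nonneg _)
  rcases h1.lt_or_eq with h | h
  · exact h
  · exfalso
    have heq : ∫ y, Real.exp (t * y) ∂ϱ = 0 := h.symm
    rw [integral_eq_zero_iff_of_nonneg_ae
      (Filter.Eventually.of_forall fun y => Real.exp_nonneg _) hint] at heq
    have h2 : ∀ᵐ y ∂ϱ, False := by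
      filter_upwards [heq] with y hy
      exact (Real.exp_pos (t * y)).ne' hy
    have h3 : ϱ Set.univ = 0 := by
      rw [ae_iff] at h2
      convert h2 using 2
      simp
    rw [measure_univ] at h3
    exact one_ne_zero h3

lemma eq_dirac_of_ae (ϱ : Measure ℝ) [IsProbabilityMeasure ϱ]
    (h : ∀ᵐ y ∂ϱ, y = 0) : ϱ = Measure.dirac 0 := by
  have h0 : ϱ ({(0:ℝ)}ᶜ) = 0 := by
    rw [ae_iff] at h
    have he : {y : ℝ | ¬ y = 0} = ({(0:ℝ)}ᶜ) := by ext y; simp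
    rwa [he] at h
  ext s hs
  rw [Measure.dirac_apply' _ hs]
  by_cases h0s : (0:ℝ) ∈ s
  · rw [Set.indicator_of_mem h0s]
    have hsub : sᶜ ⊆ ({(0:ℝ)}ᶜ) := by
      intro y hy
      simp only [Set.mem_compl_iff, Set.mem_singleton_iff]
      intro h
      exact hy (h ▸ h0s)
    have hsc : ϱ sᶜ = 0 := measure_mono_null hsub h0
    have hcompl := measure_compl hs (measure_ne_top ϱ s)
    rw [hsc, measure_univ] at hcompl
    have hle : ϱ s ≤ 1 := prob_le_one
    have : (1:ENNReal) ≤ ϱ s := tsub_eq_zero_iff_le.1 hcompl.symm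
    simpa using le_antisymm hle this
  · rw [Set.indicator_of_notMem h0s]
    have hsub : s ⊆ ({(0:ℝ)}ᶜ) := by
      intro y hy
      simp only [Set.mem_compl_iff, Set.mem_singleton_iff]
      intro h
      exact h0s (h ▸ hy)
    exact measure_mono_null hsub h0

end CW

/-- Uniqueness regime `Θ₁₁`: under the GHS-type sign condition on `Ξ‴`, for
`0 ≤ r ≤ 1/Ξ″(0)` and `s = 0`, the function `φ̃(x) = x − Ξ′(rx)` is positive for
`x > 0` when `r < 1/Ξ″(0)`, and in all cases `x = 0` is the unique solution of
`x = Ξ′(rx)`. -/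
theorem stmt_11 (ϱ : Measure ℝ) [IsProbabilityMeasure ϱ]
    (hsupp : ϱ ((Set.Icc (-1 : ℝ) 1)ᶜ) = 0)
    (hnd : ∀ a : ℝ, ϱ ≠ Measure.dirac a)
    (hsym : ϱ.map (fun x => -x) = ϱ)
    (Ξ : ℝ → ℝ) (hΞ : ∀ t, Ξ t = Real.log (∫ y, Real.exp (t * y) ∂ϱ))
    (hGHS₁ : ∀ x : ℝ, 0 < x → iteratedDeriv 3 Ξ x ≤ 0)
    (hGHS₂ : ∀ x : ℝ, x < 0 → 0 ≤ iteratedDeriv 3 Ξ x)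
    (r : ℝ) (hr0 : 0 ≤ r) (hr1 : r ≤ 1 / iteratedDeriv 2 Ξ 0) :
    (r < 1 / iteratedDeriv 2 Ξ 0 → ∀ x : ℝ, 0 < x → 0 < x - deriv Ξ (r * x)) ∧
      ∀ x : ℝ, x = deriv Ξ (r * x) ↔ x = 0 := by
  have hae := CW.ae_abs_le ϱ hsupp
  have hMpos := CW.Mf_pos ϱ hae
  have hMA := CW.analyticOnNhd_Mf ϱ hae
  have hMfeq : CW.Mf ϱ = CW.Mk ϱ 0 := by
    funext t
    simp [CW.Mf, CW.Mk]
  have hDMf : ∀ t, HasDerivAt (CW.Mf ϱ) (CW.Mk ϱ 1 t) t := by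
    intro t
    rw [hMfeq]
    exact CW.hasDerivAt_Mk ϱ hae 0 t
  have hderivMf : deriv (CW.Mf ϱ) = CW.Mk ϱ 1 := funext fun t => (hDMf t).deriv
  have hM1A : AnalyticOnNhd ℝ (CW.Mk ϱ 1) Set.univ := hderivMf ▸ hMA.deriv
  set G : ℝ → ℝ := fun t => CW.Mk ϱ 1 t / CW.Mf ϱ t with hGdef
  have hGA : AnalyticOnNhd ℝ G Set.univ := hM1A.div hMA fun x _ => (hMpos x).ne'
  set K : ℝ → ℝ := deriv G with hKdef
  have hKA : AnalyticOnNhd ℝ K Set.univ := hGA.deriv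
  have hGdiff : Differentiable ℝ G := fun x => (hGA x trivial).differentiableAt
  have hKdiff : Differentiable ℝ K := fun x => (hKA x trivial).differentiableAt
  have hDG : ∀ t, HasDerivAt G
      ((CW.Mk ϱ 2 t * CW.Mf ϱ t - CW.Mk ϱ 1 t * CW.Mk ϱ 1 t) / CW.Mf ϱ t ^ 2) t := by
    intro t
    have h1 := (CW.hasDerivAt_Mk ϱ hae 1 t).div (hDMf t) (hMpos t).ne'
    exact h1
  have hK : ∀ t, K t = (CW.Mk ϱ 2 t * CW.Mf ϱ t - CW.Mk ϱ 1 t * CW.Mk ϱ 1 t) /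
      CW.Mf ϱ t ^ 2 := fun t => (hDG t).deriv
  -- values at 0
  have hMf0 : CW.Mf ϱ 0 = 1 := by
    simp [CW.Mf]
  have hm1 : CW.Mk ϱ 1 0 = 0 := by
    have h1 : CW.Mk ϱ 1 0 = ∫ y, y ∂ϱ := by simp [CW.Mk]
    have h2 : ∫ y, y ∂(ϱ.map (fun x => -x)) = ∫ y, -y ∂ϱ :=
      integral_map measurable_neg.aemeasurable aestronglyMeasurable_id
    rw [hsym, integral_neg] at h2
    rw [h1]
    linarith
  have hv : 0 < CW.Mk ϱ 2 0 := by
    have hintp2 : Integrable (fun y => y ^ 2) ϱ := by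
      simpa using CW.integrable_pow_exp ϱ hae 2 0
    have h2eq : CW.Mk ϱ 2 0 = ∫ y, y ^ 2 ∂ϱ := by simp [CW.Mk]
    have hnn : 0 ≤ ∫ y, y ^ 2 ∂ϱ := integral_nonneg fun y => sq_nonneg y
    rcases hnn.lt_or_eq with h | h
    · rw [h2eq]; exact h
    · exfalso
      have h0 := (integral_eq_zero_iff_of_nonneg (fun y => sq_nonneg y) hintp2).1 h.symm
      have hae0 : ∀ᵐ y ∂ϱ, y = 0 := by
        filter_upwards [h0] with y hy
        exact (pow_eq_zero_iff two_ne_zero).1 hy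
      exact hnd 0 (CW.eq_dirac_of_ae ϱ hae0)
  have hG0 : G 0 = 0 := by
    rw [hGdef]
    simp [hm1]
  have hc0 : K 0 = CW.Mk ϱ 2 0 := by
    rw [hK 0, hMf0, hm1]
    ring
  set c : ℝ := K 0 with hcdef
  have hcpos : 0 < c := hc0 ▸ hv
  -- derivative identities for Ξ
  have hΞf : Ξ = fun t => Real.log (CW.Mf ϱ t) := funext hΞ
  have hdΞ : deriv Ξ = G := by
    funext t
    have h1 : HasDerivAt Ξ (CW.Mk ϱ 1 t / CW.Mf ϱ t) t := by
      rw [hΞf]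
      exact (hDMf t).log (hMpos t).ne'
    exact h1.deriv
  have hit2 : iteratedDeriv 2 Ξ = K := by
    have h2 : iteratedDeriv 2 Ξ = deriv (deriv Ξ) := by
      rw [iteratedDeriv_succ, iteratedDeriv_one]
    rw [h2, hdΞ]
  have hit3 : iteratedDeriv 3 Ξ = deriv K := by
    rw [iteratedDeriv_succ, hit2]
  -- oddness
  have hMeven : ∀ t, CW.Mf ϱ (-t) = CW.Mf ϱ t := by
    intro t
    have h1 : ∫ y, Real.exp (t * y) ∂(ϱ.map (fun x => -x)) = ∫ y, Real.exp (t * -y) ∂ϱ :=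
      integral_map measurable_neg.aemeasurable
        ((Real.continuous_exp.comp (continuous_const.mul continuous_id)).aestronglyMeasurable)
    rw [hsym] at h1
    show (∫ y, Real.exp (-t * y) ∂ϱ) = ∫ y, Real.exp (t * y) ∂ϱ
    rw [h1]
    simp only [neg_mul, mul_neg]
  have hM1odd : ∀ t, CW.Mk ϱ 1 (-t) = -CW.Mk ϱ 1 t := by
    intro t
    have hN : HasDerivAt (fun s : ℝ => CW.Mf ϱ (-s)) (CW.Mk ϱ 1 (-t) * (-1)) t := by
      have h := (hDMf (-t)).comp t (hasDerivAt_neg' t)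
      exact h
    have hfun : (fun s : ℝ => CW.Mf ϱ (-s)) = CW.Mf ϱ := funext fun s => hMeven s
    rw [hfun] at hN
    have := hN.unique (hDMf t)
    linarith
  have hGodd : ∀ t, G (-t) = -G t := by
    intro t
    show CW.Mk ϱ 1 (-t) / CW.Mf ϱ (-t) = -(CW.Mk ϱ 1 t / CW.Mf ϱ t)
    rw [hM1odd t, hMeven t, neg_div]
  -- G t ≤ 1
  have hGle1 : ∀ t, G t ≤ 1 := by
    intro t
    have hle : CW.Mk ϱ 1 t ≤ CW.Mf ϱ t := by
      rw [CW.Mk, CW.Mf]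
      refine integral_mono_ae (CW.integrable_pow_exp ϱ hae 1 t)
        (by simpa using CW.integrable_pow_exp ϱ hae 0 t) ?_
      filter_upwards [hae] with y hy
      have hy1 : y ≤ 1 := (abs_le.1 hy).2
      calc y ^ 1 * Real.exp (t * y) = y * Real.exp (t * y) := by rw [pow_one]
        _ ≤ 1 * Real.exp (t * y) :=
            mul_le_mul_of_nonneg_right hy1 (Real.exp_nonneg _)
        _ = Real.exp (t * y) := one_mul _
    exact (div_le_one (hMpos t)).2 hle
  -- K antitone on [0, ∞)
  have hKanti : AntitoneOn K (Set.Ici 0) := by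
    refine antitoneOn_of_deriv_nonpos (convex_Ici 0) hKdiff.continuous.continuousOn
      hKdiff.differentiableOn ?_
    intro x hx
    rw [interior_Ici] at hx
    rw [← hit3]
    exact hGHS₁ x hx
  have hKle : ∀ t, 0 ≤ t → K t ≤ c := fun t ht =>
    hKanti Set.self_mem_Ici ht ht
  -- h := c * t - G t is monotone on [0, ∞)
  have hDh : ∀ t, HasDerivAt (fun u => c * u - G u) (c - K t) t := by
    intro t
    have h1 : HasDerivAt (fun u : ℝ => c * u) c t := by
      simpa using (hasDerivAt_id t).const_mul c
    exact h1.sub (hGdiff t).hasDerivAt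
  have hhdiff : Differentiable ℝ (fun u => c * u - G u) := fun u => (hDh u).differentiableAt
  have hhmono : MonotoneOn (fun u => c * u - G u) (Set.Ici 0) := by
    refine monotoneOn_of_deriv_nonneg (convex_Ici 0) hhdiff.continuous.continuousOn
      hhdiff.differentiableOn ?_
    intro x hx
    rw [interior_Ici] at hx
    rw [(hDh x).deriv]
    have := hKle x hx.le
    linarith
  have hGlin : ∀ x, 0 ≤ x → G x ≤ c * x := by
    intro x hx
    have := hhmono Set.self_mem_Ici hx hx
    simp only [mul_zero, hG0, sub_zero] at this
    linarith
  -- main contradiction machine for positive fixed points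
  have key : ∀ x : ℝ, 0 < x → x = G (r * x) → False := by
    intro x hx heq
    have hrx : 0 ≤ r * x := mul_nonneg hr0 hx.le
    have hrc : r * c ≤ 1 := by
      rw [hit2] at hr1
      rw [← hcdef] at hr1
      calc r * c ≤ (1 / c) * c := mul_le_mul_of_nonneg_right hr1 hcpos.le
        _ = 1 := by field_simp
    have h1 : G (r * x) ≤ c * (r * x) := hGlin _ hrx
    have h2 : c * (r * x) ≤ x := by nlinarith
    have heq2 : c * (r * x) = x := by linarith
    have hrpos : 0 < r := by
      rcases hr0.lt_or_eq with h | h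
      · exact h
      · exfalso; rw [← h] at heq2; simp at heq2; linarith
    set a : ℝ := r * x with hadef
    have hapos : 0 < a := mul_pos hrpos hx
    have hha : c * a - G a = 0 := by
      rw [← heq, heq2]
      ring
    have hzero : ∀ t ∈ Set.Icc (0:ℝ) a, c * t - G t = 0 := by
      intro t ht
      have hle1 : c * t - G t ≤ c * a - G a := hhmono ht.1 (le_trans ht.1 ht.2) ht.2
      have hle2 : c * 0 - G 0 ≤ c * t - G t := hhmono Set.self_mem_Ici ht.1 ht.1
      rw [hG0] at hle2
      rw [hha] at hle1
      simp only [mul_zero, sub_zero] at hle2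
      linarith
    have hmid : K =ᶠ[nhds (a/2)] fun _ => c := by
      have hmem : Set.Ioo (0:ℝ) a ∈ nhds (a/2) :=
        Ioo_mem_nhds (by linarith) (by linarith)
      filter_upwards [hmem] with t ht
      have hloc : (fun u => c * u - G u) =ᶠ[nhds t] fun _ => (0:ℝ) := by
        filter_upwards [Ioo_mem_nhds ht.1 ht.2] with u hu
        exact hzero u ⟨hu.1.le, hu.2.le⟩
      have hd0 : deriv (fun u => c * u - G u) t = 0 := by
        rw [hloc.deriv_eq]
        exact deriv_const t 0
      rw [(hDh t).deriv] at hd0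
      show K t = c
      linarith
    have hKc : K = fun _ => c :=
      AnalyticOnNhd.eq_of_eventuallyEq hKA analyticOnNhd_const hmid
    have hGlinear : ∀ t, G t = c * t := by
      intro t
      have hconst := is_const_of_deriv_eq_zero (f := fun u => c * u - G u) hhdiff
        (fun u => by rw [(hDh u).deriv, hKc]; simp) t 0
      simp only [mul_zero, hG0, sub_zero] at hconst
      linarith
    have hbig := hGle1 (2 / c)
    rw [hGlinear (2 / c)] at hbig
    rw [mul_div_cancel₀ _ hcpos.ne'] at hbig
    linarith
  constructor
  · intro hrlt x hx
    rw [hdΞ]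
    rw [hit2, ← hcdef] at hrlt
    have hrc : r * c < 1 := by
      calc r * c < (1 / c) * c := by
            apply mul_lt_mul_of_pos_right hrlt hcpos
        _ = 1 := by field_simp
    have h1 : G (r * x) ≤ c * (r * x) := hGlin _ (mul_nonneg hr0 hx.le)
    nlinarith
  · intro x
    constructor
    · intro hfix
      rw [hdΞ] at hfix
      by_contra hne
      rcases lt_trichotomy x 0 with hlt | heq0 | hgt
      · refine key (-x) (neg_pos.2 hlt) ?_
        rw [mul_neg, hGodd (r * x)]
        linarith
      · exact hne heq0
      · exact key x hgt hfix
    · intro h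
      subst h
      rw [mul_zero, hdΞ, hG0]
end

section
/- Let ϱ be as above with Ξ‴(x) ≤ 0 for x > 0 and Ξ‴(x) ≥ 0 for x < 0. Fix r ≥ 0 and s > 0. Then the equation x = Ξ′(rx + s) has a unique positive solution t_ϱ, this t_ϱ is the unique global maximizer of φ(x) = rx²/2 + sx − x(Ξ′)⁻¹(x) + Ξ((Ξ′)⁻¹(x)), and moreover r·Ξ″(r·t_ϱ + s) < 1. -/
open MeasureTheory


section AuxStmt12
open Real
set_option linter.unusedSectionVars false

noncomputable def Mint (ϱ : Measure ℝ) (n : ℕ) (t : ℝ) : ℝ := ∫ y, y^n * Real.exp (t*y) ∂ϱ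

section aux
variable {ϱ : Measure ℝ} [IsProbabilityMeasure ϱ]

lemma aeb (hsupp : ϱ ((Set.Icc (-1 : ℝ) 1)ᶜ) = 0) : ∀ᵐ y ∂ϱ, |y| ≤ 1 := by
  filter_upwards [measure_eq_zero_iff_ae_notMem.mp hsupp] with y hy
  have : y ∈ Set.Icc (-1:ℝ) 1 := not_not.mp hy
  exact abs_le.2 ⟨this.1, this.2⟩

lemma pbound {t t' y : ℝ} (hy : |y| ≤ 1) (h : |t'| ≤ |t|) (n : ℕ) :
    |y^n * Real.exp (t'*y)| ≤ Real.exp |t| := by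
  have h1 : |y|^n ≤ 1 := pow_le_one₀ (abs_nonneg y) hy
  have h2 : Real.exp (t'*y) ≤ Real.exp |t| := Real.exp_le_exp.2 ((le_abs_self _).trans
    (by rw [abs_mul]; exact (mul_le_of_le_one_right (abs_nonneg t') hy).trans h))
  rw [abs_mul, abs_pow, Real.abs_exp]
  calc |y|^n * Real.exp (t'*y) ≤ 1 * Real.exp |t| :=
        mul_le_mul h1 h2 (Real.exp_pos _).le one_pos.le
    _ = _ := one_mul _

lemma Mint_integrable (hsupp : ϱ ((Set.Icc (-1 : ℝ) 1)ᶜ) = 0) (n : ℕ) (t : ℝ) :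
    Integrable (fun y => y^n * Real.exp (t*y)) ϱ := by
  refine Integrable.mono' (integrable_const (Real.exp |t|))
    ((continuous_pow n).mul (by continuity)).aestronglyMeasurable ?_
  filter_upwards [aeb hsupp] with y hy
  exact pbound hy le_rfl n

lemma Mint_hasDerivAt (hsupp : ϱ ((Set.Icc (-1 : ℝ) 1)ᶜ) = 0) (n : ℕ) (t : ℝ) :
    HasDerivAt (Mint ϱ n) (Mint ϱ (n+1) t) t := by
  have key := hasDerivAt_integral_of_dominated_loc_of_deriv_le (μ := ϱ)
    (F := fun t y => y^n * Real.exp (t*y)) (F' := fun t y => y^(n+1) * Real.exp (t*y))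
    (x₀ := t) (bound := fun _ => Real.exp (|t|+1)) (Metric.ball_mem_nhds t one_pos)
    (Filter.Eventually.of_forall fun x =>
      ((continuous_pow n).mul (by continuity)).aestronglyMeasurable)
    (Mint_integrable hsupp n t)
    ((continuous_pow (n+1)).mul (by continuity)).aestronglyMeasurable
    ?_ (integrable_const _) ?_
  · exact key.2
  · filter_upwards [aeb hsupp] with y hy x hx
    rw [Real.norm_eq_abs]
    have : |x| ≤ |t| + 1 := by
      have := abs_sub_abs_le_abs_sub x t
      simp only [Metric.mem_ball, Real.dist_eq] at hx
      linarith
    calc |y ^ (n + 1) * Real.exp (x * y)| ≤ Real.exp |x| := pbound hy le_rfl (n+1)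
      _ ≤ Real.exp (|t|+1) := Real.exp_le_exp.2 this
  · filter_upwards [] with y x _
    have : HasDerivAt (fun u : ℝ => Real.exp (u*y)) (y * Real.exp (x*y)) x := by
      simpa [mul_comm] using ((hasDerivAt_id x).mul_const y).exp
    simpa [pow_succ, mul_comm, mul_assoc, mul_left_comm] using this.const_mul (y^n)

lemma Mint_pos (hsupp : ϱ ((Set.Icc (-1 : ℝ) 1)ᶜ) = 0) (t : ℝ) : 0 < Mint ϱ 0 t := by
  have h : Real.exp (-|t|) ≤ Mint ϱ 0 t := by
    have hc : (∫ (_ : ℝ), Real.exp (-|t|) ∂ϱ) = Real.exp (-|t|) := by simp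
    rw [Mint, ← hc]
    refine integral_mono_ae (integrable_const _) (by simpa using Mint_integrable hsupp 0 t) ?_
    filter_upwards [aeb hsupp] with y hy
    simp only [pow_zero, one_mul]
    refine Real.exp_le_exp.2 ?_
    have : |t * y| ≤ |t| := by rw [abs_mul]; exact mul_le_of_le_one_right (abs_nonneg t) hy
    linarith [neg_abs_le (t*y), (abs_le.1 this).1]
  linarith [Real.exp_pos (-|t|)]





lemma eq_dirac_of_ae {m : ℝ} (h : ∀ᵐ y ∂ϱ, y = m) : ϱ = Measure.dirac m := by
  have h' : (id : ℝ → ℝ) =ᵐ[ϱ] fun _ => m := h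
  have := Measure.map_congr (mβ := by infer_instance) h'
  simpa [Measure.map_id, Measure.map_const, measure_univ] using this

lemma ae_pos_int {f : ℝ → ℝ} (hf : Integrable f ϱ) (h0 : 0 ≤ᵐ[ϱ] f)
    (hnz : ¬ (f =ᵐ[ϱ] 0)) : 0 < ∫ y, f y ∂ϱ := by
  rcases lt_or_eq_of_le (integral_nonneg_of_ae h0) with h | h
  · exact h
  · exact absurd ((integral_eq_zero_iff_of_nonneg_ae h0 hf).mp h.symm) hnz



noncomputable def Fd (ϱ : Measure ℝ) (t : ℝ) : ℝ := Mint ϱ 1 t / Mint ϱ 0 t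
noncomputable def Gd (ϱ : Measure ℝ) (t : ℝ) : ℝ :=
  (Mint ϱ 2 t * Mint ϱ 0 t - Mint ϱ 1 t * Mint ϱ 1 t) / (Mint ϱ 0 t)^2

variable (hsupp : ϱ ((Set.Icc (-1 : ℝ) 1)ᶜ) = 0)
include hsupp

lemma Fd_hasDerivAt (t : ℝ) : HasDerivAt (Fd ϱ) (Gd ϱ t) t :=
  (Mint_hasDerivAt hsupp 1 t).div (Mint_hasDerivAt hsupp 0 t) (Mint_pos hsupp t).ne'

lemma Gd_differentiable (t : ℝ) : DifferentiableAt ℝ (Gd ϱ) t := by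
  have h0 := (Mint_hasDerivAt hsupp 0 t).differentiableAt
  have h1 := (Mint_hasDerivAt hsupp 1 t).differentiableAt
  have h2 := (Mint_hasDerivAt hsupp 2 t).differentiableAt
  exact ((h2.mul h0).sub (h1.mul h1)).div (h0.pow 2)
    (pow_ne_zero 2 (Mint_pos hsupp t).ne')

lemma Xi_hasDerivAt {Ξ : ℝ → ℝ} (hΞ : ∀ t, Ξ t = Real.log (∫ y, Real.exp (t * y) ∂ϱ))
    (t : ℝ) : HasDerivAt Ξ (Fd ϱ t) t := by
  have hX : Ξ = fun t => Real.log (Mint ϱ 0 t) := by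
    funext u; rw [hΞ]; simp [Mint]
  rw [hX]
  exact (Mint_hasDerivAt hsupp 0 t).log (Mint_pos hsupp t).ne'

lemma deriv_Xi {Ξ : ℝ → ℝ} (hΞ : ∀ t, Ξ t = Real.log (∫ y, Real.exp (t * y) ∂ϱ)) :
    deriv Ξ = Fd ϱ := funext fun t => (Xi_hasDerivAt hsupp hΞ t).deriv

lemma deriv2_Xi {Ξ : ℝ → ℝ} (hΞ : ∀ t, Ξ t = Real.log (∫ y, Real.exp (t * y) ∂ϱ)) :
    iteratedDeriv 2 Ξ = Gd ϱ := by
  rw [show (2:ℕ) = 1 + 1 from rfl, iteratedDeriv_succ, iteratedDeriv_one, deriv_Xi hsupp hΞ]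
  exact funext fun t => (Fd_hasDerivAt hsupp t).deriv

lemma deriv3_Xi {Ξ : ℝ → ℝ} (hΞ : ∀ t, Ξ t = Real.log (∫ y, Real.exp (t * y) ∂ϱ)) :
    iteratedDeriv 3 Ξ = deriv (Gd ϱ) := by
  rw [show (3:ℕ) = 2 + 1 from rfl, iteratedDeriv_succ, deriv2_Xi hsupp hΞ]

-- positivity of the variance term
lemma int_sq_pos (hnd : ∀ a : ℝ, ϱ ≠ Measure.dirac a) (t m : ℝ) :
    0 < ∫ y, (y - m)^2 * Real.exp (t*y) ∂ϱ := by
  have hint : Integrable (fun y => (y - m)^2 * Real.exp (t*y)) ϱ := by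
    refine Integrable.mono' (integrable_const ((1+|m|)^2 * Real.exp |t|))
      (((continuous_id.sub continuous_const).pow 2).mul (by continuity)).aestronglyMeasurable ?_
    filter_upwards [aeb hsupp] with y hy
    rw [norm_mul, norm_pow, Real.norm_eq_abs, Real.norm_eq_abs, Real.abs_exp]
    have h1 : |y - m| ≤ 1 + |m| := (abs_sub _ _).trans (by linarith)
    have h2 : Real.exp (t*y) ≤ Real.exp |t| := Real.exp_le_exp.2 ((le_abs_self _).trans
      (by rw [abs_mul]; exact mul_le_of_le_one_right (abs_nonneg t) hy))
    have := mul_le_mul (pow_le_pow_left₀ (abs_nonneg _) h1 2) h2 (Real.exp_pos _).le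
      (by positivity)
    simpa using this
  refine ae_pos_int hint (Filter.Eventually.of_forall fun y => by positivity) ?_
  intro hz
  refine hnd m (eq_dirac_of_ae ?_)
  filter_upwards [hz] with y hy
  have : (y - m)^2 * Real.exp (t*y) = 0 := hy
  have h2 : (y - m)^2 = 0 := by
    rcases mul_eq_zero.mp this with h | h
    · exact h
    · exact absurd h (Real.exp_ne_zero _)
  nlinarith [sq_nonneg (y - m)]

lemma Gd_pos (hnd : ∀ a : ℝ, ϱ ≠ Measure.dirac a) (t : ℝ) : 0 < Gd ϱ t := by
  set m := Mint ϱ 1 t / Mint ϱ 0 t with hm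
  have h0 := Mint_pos hsupp t
  have e0 := Mint_integrable hsupp 0 t
  have e1 := Mint_integrable hsupp 1 t
  have e2 := Mint_integrable hsupp 2 t
  have key : ∫ y, (y - m)^2 * Real.exp (t*y) ∂ϱ
      = Mint ϱ 2 t - (2*m) * Mint ϱ 1 t + m^2 * Mint ϱ 0 t := by
    have hfe : (fun y => (y - m)^2 * Real.exp (t*y))
        = fun y => (y^2 * Real.exp (t*y) - (2*m) * (y^1 * Real.exp (t*y)))
            + m^2 * (y^0 * Real.exp (t*y)) := by funext y; ring
    have i1 : Integrable (fun y => y^2 * Real.exp (t*y) - (2*m) * (y^1 * Real.exp (t*y))) ϱ :=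
      e2.sub (e1.const_mul _)
    have i2 : Integrable (fun y => m^2 * (y^0 * Real.exp (t*y))) ϱ := e0.const_mul _
    rw [hfe, integral_add i1 i2, integral_sub e2 (e1.const_mul _), integral_const_mul,
      integral_const_mul]
    rfl
  have hpos := int_sq_pos hsupp hnd t m
  rw [key] at hpos
  rw [Gd]
  rw [hm] at hpos
  have : 0 < (Mint ϱ 2 t * Mint ϱ 0 t - Mint ϱ 1 t * Mint ϱ 1 t) / Mint ϱ 0 t := by
    have heq : Mint ϱ 2 t - 2 * (Mint ϱ 1 t / Mint ϱ 0 t) * Mint ϱ 1 t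
        + (Mint ϱ 1 t / Mint ϱ 0 t)^2 * Mint ϱ 0 t
        = (Mint ϱ 2 t * Mint ϱ 0 t - Mint ϱ 1 t * Mint ϱ 1 t) / Mint ϱ 0 t := by
      field_simp
      ring
    rwa [heq] at hpos
  have heq2 : (Mint ϱ 2 t * Mint ϱ 0 t - Mint ϱ 1 t * Mint ϱ 1 t) / (Mint ϱ 0 t)^2
      = (Mint ϱ 2 t * Mint ϱ 0 t - Mint ϱ 1 t * Mint ϱ 1 t) / Mint ϱ 0 t * (Mint ϱ 0 t)⁻¹ := by
    rw [pow_two, ← div_div, div_eq_mul_inv]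
  rw [heq2]
  exact mul_pos this (inv_pos.2 h0)

lemma Fd_lt_one (hnd : ∀ a : ℝ, ϱ ≠ Measure.dirac a) (t : ℝ) : Fd ϱ t < 1 := by
  have h0 := Mint_pos hsupp t
  have e0 := Mint_integrable hsupp 0 t
  have e1 := Mint_integrable hsupp 1 t
  have key : 0 < Mint ϱ 0 t - Mint ϱ 1 t := by
    have hfe : ∀ y : ℝ, (1 - y) * Real.exp (t*y) = y^0 * Real.exp (t*y) - y^1 * Real.exp (t*y) := by
      intro y; ring
    have hi : Integrable (fun y => (1 - y) * Real.exp (t*y)) ϱ := by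
      exact (e0.sub e1).congr (Filter.Eventually.of_forall fun y => by simp only [Pi.sub_apply, hfe])
    have hpos : 0 < ∫ y, (1 - y) * Real.exp (t*y) ∂ϱ := by
      refine ae_pos_int hi ?_ ?_
      · filter_upwards [aeb hsupp] with y hy
        have : y ≤ 1 := (abs_le.1 hy).2
        have := Real.exp_pos (t*y)
        simp only [Pi.zero_apply]
        nlinarith
      · intro hz
        refine hnd 1 (eq_dirac_of_ae ?_)
        filter_upwards [hz] with y hy
        have : (1 - y) * Real.exp (t*y) = 0 := hy
        rcases mul_eq_zero.mp this with h | h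
        · linarith
        · exact absurd h (Real.exp_ne_zero _)
    calc (0:ℝ) < ∫ y, (1 - y) * Real.exp (t*y) ∂ϱ := hpos
      _ = Mint ϱ 0 t - Mint ϱ 1 t := by
          simp only [hfe]; exact integral_sub e0 e1
  rw [Fd, div_lt_one h0]
  linarith

omit hsupp in
lemma Xi_even (hsym : ϱ.map (fun x => -x) = ϱ) {Ξ : ℝ → ℝ}
    (hΞ : ∀ t, Ξ t = Real.log (∫ y, Real.exp (t * y) ∂ϱ)) (t : ℝ) : Ξ (-t) = Ξ t := by
  rw [hΞ, hΞ]
  congr 1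
  calc ∫ y, Real.exp (-t * y) ∂ϱ
      = ∫ y, Real.exp (-t * y) ∂(ϱ.map (fun x => -x)) := by rw [hsym]
    _ = ∫ x, Real.exp (-t * (-x)) ∂ϱ := integral_map measurable_neg.aemeasurable
        (Continuous.aestronglyMeasurable (by continuity))
    _ = ∫ x, Real.exp (t * x) ∂ϱ := by
        congr 1; funext x; rw [neg_mul, mul_neg, neg_neg]

omit hsupp
open MeasureTheory


omit hsupp

/-- For `r ≥ 0` and `s > 0`, under the GHS-type sign condition on `Ξ‴`, the equation
`x = Ξ′(rx + s)` has a unique positive solution `t_ϱ`; it is the unique global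
maximizer of `φ(x) = rx²/2 + sx − x(Ξ′)⁻¹(x) + Ξ((Ξ′)⁻¹(x))` over the range of `Ξ′`,
and `r · Ξ″(r t_ϱ + s) < 1`. -/
theorem stmt_12 (ϱ : Measure ℝ) [IsProbabilityMeasure ϱ]
    (hsupp : ϱ ((Set.Icc (-1 : ℝ) 1)ᶜ) = 0)
    (hnd : ∀ a : ℝ, ϱ ≠ Measure.dirac a)
    (hsym : ϱ.map (fun x => -x) = ϱ)
    (Ξ : ℝ → ℝ) (hΞ : ∀ t, Ξ t = Real.log (∫ y, Real.exp (t * y) ∂ϱ))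
    (hGHS₁ : ∀ x : ℝ, 0 < x → iteratedDeriv 3 Ξ x ≤ 0)
    (hGHS₂ : ∀ x : ℝ, x < 0 → 0 ≤ iteratedDeriv 3 Ξ x)
    (r s : ℝ) (hr : 0 ≤ r) (hs : 0 < s) :
    ∃ t : ℝ, 0 < t ∧ t = deriv Ξ (r * t + s) ∧
      (∀ t' : ℝ, 0 < t' → t' = deriv Ξ (r * t' + s) → t' = t) ∧
      (∀ x ∈ Set.range (deriv Ξ), x ≠ t →
        r * x ^ 2 / 2 + s * x - x * Function.invFun (deriv Ξ) x +
            Ξ (Function.invFun (deriv Ξ) x) <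
          r * t ^ 2 / 2 + s * t - t * Function.invFun (deriv Ξ) t +
            Ξ (Function.invFun (deriv Ξ) t)) ∧
      r * iteratedDeriv 2 Ξ (r * t + s) < 1 := by
  have hdΞ : deriv Ξ = Fd ϱ := deriv_Xi hsupp hΞ
  have hGpos : ∀ u, 0 < Gd ϱ u := Gd_pos hsupp hnd
  have hFderiv : ∀ u, HasDerivAt (Fd ϱ) (Gd ϱ u) u := Fd_hasDerivAt hsupp
  have hFC : Continuous (Fd ϱ) :=
    continuous_iff_continuousAt.2 fun u => (hFderiv u).differentiableAt.continuousAt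
  have hFmono : StrictMono (Fd ϱ) :=
    strictMono_of_deriv_pos (fun u => ((hFderiv u).deriv).symm ▸ hGpos u)
  have hFodd : ∀ u, Fd ϱ (-u) = - Fd ϱ u := by
    intro u
    have hE : (fun x => Ξ (-x)) = Ξ := funext fun x => Xi_even hsym hΞ x
    have h1 : deriv (fun x => Ξ (-x)) u = - deriv Ξ (-u) := deriv_comp_neg Ξ u
    rw [hE, hdΞ] at h1
    linarith
  have hF0 : Fd ϱ 0 = 0 := by have h1 := hFodd 0; rw [neg_zero] at h1; linarith
  set h := fun u : ℝ => r * Fd ϱ u + s - u with hhdef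
  have hhderiv : ∀ u, HasDerivAt h (r * Gd ϱ u - 1) u := fun u =>
    (((hFderiv u).const_mul r).add_const s).sub (hasDerivAt_id u)
  have hhC : Continuous h :=
    continuous_iff_continuousAt.2 fun u => (hhderiv u).differentiableAt.continuousAt
  have hh0 : h 0 = s := by simp [hhdef, hF0]
  have hhd : ∀ u, deriv h u = r * Gd ϱ u - 1 := fun u => (hhderiv u).deriv
  have hGanti : AntitoneOn (Gd ϱ) (Set.Ici (0:ℝ)) := by
    refine antitoneOn_of_deriv_nonpos (convex_Ici 0)
      (fun u _ => (Gd_differentiable hsupp u).continuousAt.continuousWithinAt)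
      (fun u _ => (Gd_differentiable hsupp u).differentiableWithinAt) ?_
    intro x hx
    rw [interior_Ici] at hx
    have h3 := hGHS₁ x hx
    rwa [deriv3_Xi hsupp hΞ] at h3
  have hdh_anti : AntitoneOn (deriv h) (Set.Ici (0:ℝ)) := by
    intro a ha b hb hab
    rw [hhd, hhd]
    have := hGanti ha hb hab
    nlinarith
  obtain ⟨ustar, hum, hustar⟩ : ∃ u ∈ Set.Icc (0:ℝ) (r+s+1), h u = 0 := by
    have hle : (0:ℝ) ≤ r+s+1 := by linarith
    have hmem : (0:ℝ) ∈ Set.Icc (h (r+s+1)) (h 0) := by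
      constructor
      · have hF1 := Fd_lt_one hsupp hnd (r+s+1)
        have h2 : r * Fd ϱ (r+s+1) ≤ r := by nlinarith
        simp only [hhdef]; linarith
      · rw [hh0]; exact hs.le
    obtain ⟨u, hu, hu0⟩ := intermediate_value_Icc' hle hhC.continuousOn hmem
    exact ⟨u, hu, hu0⟩
  have hupos : 0 < ustar := by
    rcases eq_or_lt_of_le hum.1 with he | hlt
    · exfalso; rw [← he] at hustar; rw [hh0] at hustar; linarith
    · exact hlt
  have huniq : ∀ u, 0 < u → h u = 0 → u = ustar := by
    have key : ∀ a b, 0 < a → a < b → h a = 0 → h b = 0 → False := by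
      intro a b ha hab hza hzb
      obtain ⟨c, hc, hdc⟩ := exists_deriv_eq_zero hab hhC.continuousOn (hza.trans hzb.symm)
      have hc0 : (0:ℝ) ≤ c := (ha.trans hc.1).le
      have hmono : MonotoneOn h (Set.Icc 0 c) := by
        refine monotoneOn_of_deriv_nonneg (convex_Icc 0 c) hhC.continuousOn
          (fun x _ => (hhderiv x).differentiableAt.differentiableWithinAt) ?_
        intro x hx
        rw [interior_Icc] at hx
        have h4 : deriv h c ≤ deriv h x := hdh_anti hx.1.le hc0 hx.2.le
        rw [hdc] at h4; exact h4
      have h0a : h 0 ≤ h a := hmono ⟨le_rfl, hc0⟩ ⟨ha.le, hc.1.le⟩ ha.le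
      rw [hh0, hza] at h0a; linarith
    intro u hu hz
    rcases lt_trichotomy u ustar with hlt | he | hgt
    · exact (key u ustar hu hlt hz hustar).elim
    · exact he
    · exact (key ustar u hupos hgt hustar hz).elim
  have hd_neg : deriv h ustar < 0 := by
    by_contra hcon
    push_neg at hcon
    have hmono : MonotoneOn h (Set.Icc 0 ustar) := by
      refine monotoneOn_of_deriv_nonneg (convex_Icc _ _) hhC.continuousOn
        (fun x _ => (hhderiv x).differentiableAt.differentiableWithinAt) ?_
      intro x hx
      rw [interior_Icc] at hx
      exact le_trans hcon (hdh_anti hx.1.le hupos.le hx.2.le)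
    have h5 := hmono ⟨le_rfl, hupos.le⟩ ⟨hupos.le, le_rfl⟩ hupos.le
    rw [hh0, hustar] at h5; linarith
  have hpos_lt : ∀ u, 0 ≤ u → u < ustar → 0 < h u := by
    intro u hu0 hu
    by_contra hcon
    push_neg at hcon
    have hmem : (0:ℝ) ∈ Set.Icc (h u) (h 0) := ⟨hcon, by rw [hh0]; exact hs.le⟩
    obtain ⟨v, hv, hv0⟩ := intermediate_value_Icc' hu0 hhC.continuousOn hmem
    have hvpos : 0 < v := by
      rcases eq_or_lt_of_le hv.1 with he | hlt
      · exfalso; rw [← he] at hv0; rw [hh0] at hv0; linarith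
      · exact hlt
    have h6 := huniq v hvpos hv0
    rw [h6] at hv
    exact absurd hv.2 (not_le.2 hu)
  have hanti : StrictAntiOn h (Set.Ici ustar) := by
    refine strictAntiOn_of_deriv_neg (convex_Ici _) hhC.continuousOn ?_
    intro x hx
    rw [interior_Ici] at hx
    calc deriv h x ≤ deriv h ustar := hdh_anti hupos.le (hupos.trans hx).le hx.le
      _ < 0 := hd_neg
  have hneg_gt : ∀ u, ustar < u → h u < 0 := by
    intro u hu
    have h7 := hanti (Set.self_mem_Ici) hu.le hu
    rwa [hustar] at h7
  have hust_eq : r * Fd ϱ ustar + s = ustar := by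
    have := hustar; simp only [hhdef] at this; linarith
  refine ⟨Fd ϱ ustar, ?_, ?_, ?_, ?_, ?_⟩
  · rw [← hF0]; exact hFmono hupos
  · rw [hdΞ, hust_eq]
  · intro t' ht' heq
    rw [hdΞ] at heq
    have hu'pos : 0 < r * t' + s := by nlinarith
    have hz : h (r * t' + s) = 0 := by simp only [hhdef]; rw [← heq]; ring
    have h8 := huniq _ hu'pos hz
    rw [heq, h8]
  · intro x hx hxt
    rw [hdΞ] at hx ⊢
    obtain ⟨u, rfl⟩ := hx
    have hinv : ∀ v, Function.invFun (Fd ϱ) (Fd ϱ v) = v :=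
      fun v => Function.leftInverse_invFun hFmono.injective v
    rw [hinv u, hinv ustar]
    set ψ := fun v => r * Fd ϱ v ^ 2 / 2 + s * Fd ϱ v - Fd ϱ v * v + Ξ v with hψdef
    show ψ u < ψ ustar
    have hψd : ∀ v, HasDerivAt ψ (Gd ϱ v * h v) v := by
      intro v
      have hF := hFderiv v
      have hXi := Xi_hasDerivAt hsupp hΞ v
      have H := ((((hF.pow 2).const_mul (r/2)).add (hF.const_mul s)).sub
        (hF.mul (hasDerivAt_id v))).add hXi
      have heq2 : ψ = fun w => r / 2 * Fd ϱ w ^ 2 + s * Fd ϱ w - Fd ϱ w * w + Ξ w := by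
        funext w; simp only [hψdef]; ring
      rw [heq2]
      exact H.congr_deriv (by simp only [hhdef, id_eq]; norm_num; ring)
    have hψC : Continuous ψ :=
      continuous_iff_continuousAt.2 fun v => (hψd v).differentiableAt.continuousAt
    have hψmono : StrictMonoOn ψ (Set.Icc 0 ustar) := by
      refine strictMonoOn_of_deriv_pos (convex_Icc _ _) hψC.continuousOn ?_
      intro x hx2
      rw [interior_Icc] at hx2
      rw [(hψd x).deriv]
      exact mul_pos (hGpos x) (hpos_lt x hx2.1.le hx2.2)
    have hψanti : StrictAntiOn ψ (Set.Ici ustar) := by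
      refine strictAntiOn_of_deriv_neg (convex_Ici _) hψC.continuousOn ?_
      intro x hx2
      rw [interior_Ici] at hx2
      rw [(hψd x).deriv]
      have := hneg_gt x hx2
      nlinarith [hGpos x]
    have hψle : ∀ v, 0 ≤ v → ψ v ≤ ψ ustar := by
      intro v hv
      rcases le_or_gt v ustar with hle | hgt
      · exact hψmono.monotoneOn ⟨hv, hle⟩ ⟨hupos.le, le_rfl⟩ hle
      · exact (hψanti Set.self_mem_Ici hgt.le hgt).le
    have hune : u ≠ ustar := fun he => hxt (by rw [he])
    rcases lt_or_ge u 0 with hu | hu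
    · have hFu : Fd ϱ u < 0 := by rw [← hF0]; exact hFmono hu
      have hsym2 : ψ (-u) = ψ u - 2*s*Fd ϱ u := by
        simp only [hψdef]; rw [hFodd u, Xi_even hsym hΞ u]; ring
      have h9 : ψ u < ψ (-u) := by nlinarith [mul_pos hs (neg_pos.2 hFu)]
      calc ψ u < ψ (-u) := h9
        _ ≤ ψ ustar := hψle (-u) (by linarith)
    · rcases hune.lt_or_gt with hlt | hgt
      · exact hψmono ⟨hu, hlt.le⟩ ⟨hupos.le, le_rfl⟩ hlt
      · exact hψanti Set.self_mem_Ici hgt.le hgt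
  · rw [deriv2_Xi hsupp hΞ, hust_eq]
    have := hd_neg
    rw [hhd] at this
    linarith


end aux

end AuxStmt12
end

section
/- For the Ising model with matrix A (symmetric, nonnegative entries, zero diagonal) on spins σ ∈ {−1,1}^N, the conditional mean t_{j₁} = tanh(∑_k A(j₁,k)σ_k) satisfies the second-order discrete difference bound |t_{j₁} − t_{j₁}^{j₂} − t_{j₁}^{j₃} + t_{j₁}^{j₂,j₃}| ≤ A(j₁,j₂)·A(j₁,j₃) for distinct j₁, j₂, j₃, where superscripts denote setting the corresponding spins to 0. -/
/-- `t_{j₁}^S = tanh(∑_{k ∉ S} A(j₁,k) σ_k)`: the Ising conditional mean with the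
spins in `S` set to `0`. -/
noncomputable def isingCondMean {N : ℕ} (A : Fin N → Fin N → ℝ) (σ : Fin N → ℝ)
    (j₁ : Fin N) (S : Finset (Fin N)) : ℝ :=
  Real.tanh (∑ k ∈ Finset.univ \ S, A j₁ k * σ k)

lemma tanh_hasDerivAt (x : ℝ) : HasDerivAt Real.tanh ((Real.cosh x ^ 2)⁻¹) x := by
  have h := (Real.hasDerivAt_sinh x).div (Real.hasDerivAt_cosh x) (Real.cosh_pos x).ne'
  have hfun : (Real.sinh / Real.cosh) = Real.tanh := by
    funext y; rw [Pi.div_apply, Real.tanh_eq_sinh_div_cosh]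
  rw [hfun] at h
  refine h.congr_deriv ?_
  have := Real.cosh_sq_sub_sinh_sq x
  field_simp
  nlinarith [this]

lemma sech_sq_hasDerivAt (x : ℝ) :
    HasDerivAt (fun y => (Real.cosh y ^ 2)⁻¹)
      (-(2 * Real.sinh x * Real.cosh x) / (Real.cosh x ^ 2) ^ 2) x := by
  have h := ((Real.hasDerivAt_cosh x).pow 2).inv (pow_ne_zero 2 (Real.cosh_pos x).ne')
  refine h.congr_deriv ?_
  simp only [Pi.pow_apply]
  ring_nf

lemma sech_sq_deriv_bound (x : ℝ) :
    ‖(-(2 * Real.sinh x * Real.cosh x) / (Real.cosh x ^ 2) ^ 2)‖ ≤ 1 := by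
  have hc : 1 ≤ Real.cosh x := Real.one_le_cosh x
  have hsq : Real.cosh x ^ 2 = Real.sinh x ^ 2 + 1 := Real.cosh_sq x
  rw [Real.norm_eq_abs, abs_div, abs_neg,
    abs_of_nonneg (by positivity : (0:ℝ) ≤ (Real.cosh x ^ 2) ^ 2)]
  rw [div_le_one (by positivity)]
  have h1 : |2 * Real.sinh x * Real.cosh x| ≤ 2 * |Real.sinh x| * Real.cosh x := by
    rw [abs_mul, abs_mul]
    simp [abs_of_nonneg (le_trans zero_le_one hc)]
  refine h1.trans ?_
  have hs := abs_nonneg (Real.sinh x)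
  have h2 : Real.cosh x ^ 2 = |Real.sinh x| ^ 2 + 1 := by rw [sq_abs]; exact hsq
  nlinarith [sq_nonneg (|Real.sinh x| - Real.cosh x), sq_nonneg (Real.sinh x),
    sq_nonneg (Real.cosh x - 1)]

lemma sech_sq_lip (x y : ℝ) : |(Real.cosh x ^ 2)⁻¹ - (Real.cosh y ^ 2)⁻¹| ≤ |x - y| := by
  have := Convex.norm_image_sub_le_of_norm_hasDerivWithin_le
    (f := fun y => (Real.cosh y ^ 2)⁻¹)
    (f' := fun x => -(2 * Real.sinh x * Real.cosh x) / (Real.cosh x ^ 2) ^ 2)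
    (s := Set.univ) (C := 1)
    (fun z _ => (sech_sq_hasDerivAt z).hasDerivWithinAt)
    (fun z _ => sech_sq_deriv_bound z)
    convex_univ (Set.mem_univ y) (Set.mem_univ x)
  simpa [Real.norm_eq_abs] using this

lemma tanh_mixed_diff (a b c : ℝ) :
    |Real.tanh (a + b + c) - Real.tanh (a + c) - Real.tanh (a + b) + Real.tanh a|
      ≤ |c| * |b| := by
  set g : ℝ → ℝ := fun x => Real.tanh (x + c) - Real.tanh x with hg
  have hgd : ∀ x : ℝ, HasDerivAt g ((Real.cosh (x + c) ^ 2)⁻¹ - (Real.cosh x ^ 2)⁻¹) x := by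
    intro x
    have h1 : HasDerivAt (fun y : ℝ => Real.tanh (y + c)) ((Real.cosh (x + c) ^ 2)⁻¹) x := by
      have := (tanh_hasDerivAt (x + c)).comp x ((hasDerivAt_id x).add_const c)
      rw [mul_one] at this
      exact this
    exact h1.sub (tanh_hasDerivAt x)
  have key := Convex.norm_image_sub_le_of_norm_hasDerivWithin_le
    (f := g) (f' := fun x => (Real.cosh (x + c) ^ 2)⁻¹ - (Real.cosh x ^ 2)⁻¹)
    (s := Set.univ) (C := |c|)
    (fun z _ => (hgd z).hasDerivWithinAt)
    (fun z _ => by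
      have := sech_sq_lip (z + c) z
      simpa [Real.norm_eq_abs] using this)
    convex_univ (Set.mem_univ a) (Set.mem_univ (a + b))
  have hrw : g (a + b) - g a =
      Real.tanh (a + b + c) - Real.tanh (a + c) - Real.tanh (a + b) + Real.tanh a := by
    simp only [hg]; ring_nf
  rw [← hrw]
  simpa [Real.norm_eq_abs] using key

/-- Second-order discrete difference bound for the Ising conditional mean:
`|t_{j₁} − t_{j₁}^{j₂} − t_{j₁}^{j₃} + t_{j₁}^{j₂,j₃}| ≤ A(j₁,j₂) · A(j₁,j₃)`. -/
theorem stmt_13 {N : ℕ} (A : Fin N → Fin N → ℝ) (σ : Fin N → ℝ)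
    (hσ : ∀ i, σ i = 1 ∨ σ i = -1)
    (hsym : ∀ i j, A i j = A j i) (hnn : ∀ i j, 0 ≤ A i j) (hdiag : ∀ i, A i i = 0)
    (j₁ j₂ j₃ : Fin N) (h12 : j₁ ≠ j₂) (h13 : j₁ ≠ j₃) (h23 : j₂ ≠ j₃) :
    |isingCondMean A σ j₁ ∅ - isingCondMean A σ j₁ {j₂} - isingCondMean A σ j₁ {j₃} +
        isingCondMean A σ j₁ {j₂, j₃}| ≤ A j₁ j₂ * A j₁ j₃ := by
  classical
  set f : Fin N → ℝ := fun k => A j₁ k * σ k with hf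
  have hsum : ∀ S : Finset (Fin N),
      ∑ k ∈ Finset.univ \ S, f k = ∑ k, f k - ∑ k ∈ S, f k := by
    intro S
    rw [Finset.sum_sdiff_eq_sub (Finset.subset_univ S)]
  set T : ℝ := ∑ k, f k with hT
  set b : ℝ := f j₂ with hb
  set c : ℝ := f j₃ with hc
  set a : ℝ := T - b - c with ha
  have e0 : isingCondMean A σ j₁ ∅ = Real.tanh (a + b + c) := by
    unfold isingCondMean
    rw [hsum]; congr 1
    simp only [Finset.sum_empty, sub_zero, ha]; ring
  have e2 : isingCondMean A σ j₁ {j₂} = Real.tanh (a + c) := by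
    unfold isingCondMean
    rw [hsum]
    congr 1
    simp only [Finset.sum_singleton, ha]; ring
  have e3 : isingCondMean A σ j₁ {j₃} = Real.tanh (a + b) := by
    unfold isingCondMean
    rw [hsum]
    congr 1
    simp only [Finset.sum_singleton, ha]; ring
  have e23 : isingCondMean A σ j₁ {j₂, j₃} = Real.tanh a := by
    unfold isingCondMean
    rw [hsum]
    congr 1
    rw [Finset.sum_pair h23]
    rw [ha]; ring
  rw [e0, e2, e3, e23]
  have hbd := tanh_mixed_diff a b c
  have habs : ∀ i, |σ i| = 1 := by
    intro i; rcases hσ i with h | h <;> simp [h]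
  have hbv : |b| = A j₁ j₂ := by
    rw [hb, hf]; simp only [abs_mul, habs, mul_one, abs_of_nonneg (hnn j₁ j₂)]
  have hcv : |c| = A j₁ j₃ := by
    rw [hc, hf]; simp only [abs_mul, habs, mul_one, abs_of_nonneg (hnn j₁ j₃)]
  calc |Real.tanh (a + b + c) - Real.tanh (a + c) - Real.tanh (a + b) + Real.tanh a|
      ≤ |c| * |b| := hbd
    _ = A j₁ j₂ * A j₁ j₃ := by rw [hbv, hcv]; ring
end
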